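/- Let U ⊆ ℂ be a domain and F : U × U → ℂ holomorphic in two variables. If F(z, conj z) = 0 for all z in some nonempty open subset of U whose conjugate is contained in U, then F vanishes identically on U × U (assuming U × U is connected, e.g. U connected). -/
import Mathlib

open Complex Metric Filter Topology

/-- A sequence of real offsets tending to `0` from the right, used to produce
frequently-vanishing points. -/
private lemma aux_tendsto_seq (c : ℝ) (x : ℝ) :
    Tendsto (fun n : ℕ => ((x + c / (n + 2) : ℝ) : ℂ)) atTop (𝓝 (x : ℂ)) := by
  have h1 : Tendsto (fun n : ℕ => ((n : ℝ) + 2)) atTop atTop :=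
    tendsto_atTop_add_const_right _ 2 tendsto_natCast_atTop_atTop
  have h2 : Tendsto (fun n : ℕ => c / ((n : ℝ) + 2)) atTop (𝓝 0) :=
    tendsto_const_nhds.div_atTop h1
  have h3 : Tendsto (fun n : ℕ => x + c / ((n : ℝ) + 2)) atTop (𝓝 (x + 0)) :=
    tendsto_const_nhds.add h2
  rw [add_zero] at h3
  exact (Complex.continuous_ofReal.continuousAt.tendsto).comp h3

private lemma aux_frequently (c : ℝ) (hc : 0 < c) (x : ℝ) (f : ℂ → ℂ)
    (hf : ∀ n : ℕ, f ((x + c / (n + 2) : ℝ) : ℂ) = 0) :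
    ∃ᶠ z in 𝓝[≠] (x : ℂ), f z = 0 := by
  have hne : ∀ n : ℕ, ((x + c / (n + 2) : ℝ) : ℂ) ≠ (x : ℂ) := by
    intro n
    have hpos : 0 < c / ((n : ℝ) + 2) := by positivity
    simp only [ne_eq, Complex.ofReal_inj]
    intro h
    nlinarith
  have htend : Tendsto (fun n : ℕ => ((x + c / (n + 2) : ℝ) : ℂ)) atTop (𝓝[≠] (x : ℂ)) := by
    refine tendsto_nhdsWithin_of_tendsto_nhds_of_eventually_within _ (aux_tendsto_seq c x) ?_
    exact Filter.Eventually.of_forall fun n => hne n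
  exact htend.frequently (Filter.Eventually.of_forall hf).frequently

/-- Identity principle for two complex variables: if `F` is holomorphic on `U × U`
with `U` a domain and `F(z, conj z) = 0` on a nonempty open subset of `U` whose
conjugate lies in `U`, then `F` vanishes identically on `U × U`. -/
theorem two_variable_identity_principle
    (U : Set ℂ) (hU : IsOpen U) (hUconn : IsConnected U)
    (F : ℂ × ℂ → ℂ) (hF : AnalyticOnNhd ℂ F (U ×ˢ U))
    (s : Set ℂ) (hs : IsOpen s) (hsne : s.Nonempty) (hsU : s ⊆ U)
    (hsconjU : (fun z => (starRingEnd ℂ) z) '' s ⊆ U)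
    (hvanish : ∀ z ∈ s, F (z, (starRingEnd ℂ) z) = 0) :
    ∀ z ∈ U, ∀ w ∈ U, F (z, w) = 0 := by
  obtain ⟨z₀, hz₀⟩ := hsne
  set a₀ : ℂ := (z₀.re : ℂ) with ha₀
  set b₀ : ℂ := (z₀.im : ℂ) with hb₀
  set L : ℂ × ℂ → ℂ × ℂ := fun p => (p.1 + p.2 * Complex.I, p.1 - p.2 * Complex.I) with hLdef
  set G : ℂ × ℂ → ℂ := fun p => F (L p) with hGdef
  have hz₀U : z₀ ∈ U := hsU hz₀
  have hcz₀U : (starRingEnd ℂ) z₀ ∈ U := hsconjU ⟨z₀, hz₀, rfl⟩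
  -- L is analytic
  have hLan : ∀ p : ℂ × ℂ, AnalyticAt ℂ L p := fun p =>
    ((analyticAt_fst.add (analyticAt_snd.mul analyticAt_const)).prod
      (analyticAt_fst.sub (analyticAt_snd.mul analyticAt_const)))
  -- L (a₀, b₀) = (z₀, conj z₀)
  have hLa₀b₀ : L (a₀, b₀) = (z₀, (starRingEnd ℂ) z₀) := by
    have h1 : (z₀.re : ℂ) + (z₀.im : ℂ) * Complex.I = z₀ := Complex.re_add_im z₀
    have h2 : (starRingEnd ℂ) z₀ = (z₀.re : ℂ) - (z₀.im : ℂ) * Complex.I := by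
      have hsc := Complex.sub_conj z₀
      push_cast at hsc
      linear_combination -h1 - hsc
    simp only [hLdef, ha₀, hb₀, Prod.mk.injEq]
    exact ⟨h1, h2.symm⟩
  -- choose r : ball z₀ r ⊆ s
  obtain ⟨r, hr0, hrs⟩ := Metric.isOpen_iff.1 hs z₀ hz₀
  -- choose δ : ball (a₀,b₀) δ ⊆ L ⁻¹' (U ×ˢ U)
  have hVopen : IsOpen (L ⁻¹' (U ×ˢ U)) := by
    have : Continuous L := by
      apply Continuous.prodMk
      · exact continuous_fst.add (continuous_snd.mul continuous_const)
      · exact continuous_fst.sub (continuous_snd.mul continuous_const)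
    exact (hU.prod hU).preimage this
  have hmemV : (a₀, b₀) ∈ L ⁻¹' (U ×ˢ U) := by
    simp only [Set.mem_preimage, hLa₀b₀]
    exact ⟨hz₀U, hcz₀U⟩
  obtain ⟨δ, hδ0, hδ⟩ := Metric.isOpen_iff.1 hVopen _ hmemV
  set ε : ℝ := min δ (r / 2) with hε
  have hε0 : 0 < ε := lt_min hδ0 (half_pos hr0)
  have hεδ : ε ≤ δ := min_le_left _ _
  have hεr : ε ≤ r / 2 := min_le_right _ _
  -- balls map into the domain
  have hballV : ∀ a ∈ ball a₀ ε, ∀ b ∈ ball b₀ ε, L (a, b) ∈ U ×ˢ U := by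
    intro a ha b hb
    have : (a, b) ∈ ball (a₀, b₀) δ := by
      rw [← ball_prod_same]
      exact ⟨ha.trans_le hεδ, hb.trans_le hεδ⟩
    exact hδ this
  -- G analytic at points of the product ball
  have hGan : ∀ a ∈ ball a₀ ε, ∀ b ∈ ball b₀ ε, AnalyticAt ℂ G (a, b) := by
    intro a ha b hb
    exact (hF _ (hballV a ha b hb)).comp (hLan (a, b))
  -- real points in the balls give points of s
  have hreal : ∀ t u : ℝ, (t : ℂ) ∈ ball a₀ ε → (u : ℂ) ∈ ball b₀ ε →
      ((t : ℂ) + (u : ℂ) * Complex.I) ∈ s := by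
    intro t u ht hu
    apply hrs
    rw [mem_ball] at ht hu ⊢
    have h1 : (z₀.re : ℂ) + (z₀.im : ℂ) * Complex.I = z₀ := Complex.re_add_im z₀
    have hsplit : ((t : ℂ) + (u : ℂ) * Complex.I) - z₀ =
        ((t : ℂ) - (z₀.re : ℂ)) + ((u : ℂ) - (z₀.im : ℂ)) * Complex.I := by
      linear_combination h1
    rw [dist_eq_norm, hsplit]
    calc ‖((t : ℂ) - (z₀.re : ℂ)) + ((u : ℂ) - (z₀.im : ℂ)) * Complex.I‖
        ≤ ‖((t : ℂ) - (z₀.re : ℂ))‖ + ‖((u : ℂ) - (z₀.im : ℂ)) * Complex.I‖ := norm_add_le _ _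
      _ = ‖((t : ℂ) - (z₀.re : ℂ))‖ + ‖((u : ℂ) - (z₀.im : ℂ))‖ := by
          rw [norm_mul, Complex.norm_I, mul_one]
      _ = dist (t : ℂ) a₀ + dist (u : ℂ) b₀ := by rw [dist_eq_norm, dist_eq_norm]
      _ < ε + ε := add_lt_add ht hu
      _ ≤ r / 2 + r / 2 := add_le_add hεr hεr
      _ = r := by ring
  -- G vanishes at real points
  have hGreal : ∀ t u : ℝ, (t : ℂ) ∈ ball a₀ ε → (u : ℂ) ∈ ball b₀ ε →
      G ((t : ℂ), (u : ℂ)) = 0 := by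
    intro t u ht hu
    have hz : ((t : ℂ) + (u : ℂ) * Complex.I) ∈ s := hreal t u ht hu
    have hv := hvanish _ hz
    have hconj : (starRingEnd ℂ) ((t : ℂ) + (u : ℂ) * Complex.I) =
        (t : ℂ) - (u : ℂ) * Complex.I := by
      simp [map_add, map_mul, Complex.conj_ofReal, Complex.conj_I, sub_eq_add_neg]
    simp only [hGdef, hLdef]
    rw [← hconj]
    exact hv
  -- membership of the sequence points
  have hseq_mem : ∀ (x : ℝ) (c : ℂ), c = (x : ℂ) → ∀ n : ℕ,
      ((x + ε / (n + 2) : ℝ) : ℂ) ∈ ball c ε := by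
    intro x c hc n
    rw [hc, mem_ball, Complex.isometry_ofReal.dist_eq, Real.dist_eq]
    have h2 : (0:ℝ) < (n : ℝ) + 2 := by positivity
    have h3 : ε / ((n : ℝ) + 2) ≤ ε / 2 := by
      apply div_le_div_of_nonneg_left (le_of_lt hε0) (by norm_num)
      have : (0:ℝ) ≤ (n:ℝ) := Nat.cast_nonneg n
      linarith
    have h4 : 0 < ε / ((n : ℝ) + 2) := by positivity
    rw [show x + ε / (n + 2) - x = ε / ((n:ℝ) + 2) by ring, abs_of_pos h4]
    linarith
  -- the center points are in the balls
  have ha₀mem : a₀ ∈ ball a₀ ε := mem_ball_self hε0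
  have hb₀mem : b₀ ∈ ball b₀ ε := mem_ball_self hε0
  -- Step 1: for real u, G (·, u) vanishes on ball a₀ ε
  have step1 : ∀ u : ℝ, (u : ℂ) ∈ ball b₀ ε → ∀ a ∈ ball a₀ ε, G (a, (u : ℂ)) = 0 := by
    intro u hu a ha
    have hA : AnalyticOnNhd ℂ (fun a => G (a, (u : ℂ))) (ball a₀ ε) := by
      intro a' ha'
      have hp : AnalyticAt ℂ (fun a : ℂ => (a, (u : ℂ))) a' := analyticAt_id.prod analyticAt_const
      exact (hGan a' ha' _ hu).comp_of_eq hp rfl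
    have hfreq : ∃ᶠ z in 𝓝[≠] a₀, (fun a => G (a, (u : ℂ))) z = 0 := by
      rw [ha₀]
      apply aux_frequently ε hε0 z₀.re
      intro n
      exact hGreal _ u (hseq_mem z₀.re a₀ ha₀ n) hu
    exact hA.eqOn_zero_of_preconnected_of_frequently_eq_zero
      (convex_ball a₀ ε).isPreconnected ha₀mem hfreq ha
  -- Step 2: for a in ball, G (a, ·) vanishes on ball b₀ ε
  have step2 : ∀ a ∈ ball a₀ ε, ∀ b ∈ ball b₀ ε, G (a, b) = 0 := by
    intro a ha b hb
    have hA : AnalyticOnNhd ℂ (fun b => G (a, b)) (ball b₀ ε) := by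
      intro b' hb'
      have hp : AnalyticAt ℂ (fun b : ℂ => (a, b)) b' := analyticAt_const.prod analyticAt_id
      exact (hGan a ha b' hb').comp_of_eq hp rfl
    have hfreq : ∃ᶠ z in 𝓝[≠] b₀, (fun b => G (a, b)) z = 0 := by
      rw [hb₀]
      apply aux_frequently ε hε0 z₀.im
      intro n
      exact step1 _ (hseq_mem z₀.im b₀ hb₀ n) a ha
    exact hA.eqOn_zero_of_preconnected_of_frequently_eq_zero
      (convex_ball b₀ ε).isPreconnected hb₀mem hfreq hb
  -- F (z, w) = G (M (z, w))
  set M : ℂ × ℂ → ℂ × ℂ := fun p => ((p.1 + p.2) / 2, (p.2 - p.1) * Complex.I / 2) with hMdef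
  have hFG : ∀ p : ℂ × ℂ, F p = G (M p) := by
    rintro ⟨z, w⟩
    have hLM : ((z + w) / 2 + (w - z) * Complex.I / 2 * Complex.I,
        (z + w) / 2 - (w - z) * Complex.I / 2 * Complex.I) = (z, w) := by
      rw [Prod.mk.injEq]
      constructor
      · linear_combination ((w - z) / 2) * Complex.I_mul_I
      · linear_combination (-(w - z) / 2) * Complex.I_mul_I
    simp only [hGdef, hLdef, hMdef]
    rw [hLM]
  have hMcont : Continuous M := by
    apply Continuous.prodMk
    · exact (continuous_fst.add continuous_snd).div_const 2
    · exact ((continuous_snd.sub continuous_fst).mul continuous_const).div_const 2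
  have hM₀ : M (z₀, (starRingEnd ℂ) z₀) = (a₀, b₀) := by
    have h1 := Complex.add_conj z₀
    have h2 := Complex.sub_conj z₀
    push_cast at h1 h2
    simp only [hMdef, ha₀, hb₀]
    rw [Prod.mk.injEq]
    constructor
    · linear_combination h1 / 2
    · linear_combination (-Complex.I / 2) * h2 - ((z₀.im : ℂ)) * Complex.I_mul_I
  -- F vanishes near (z₀, conj z₀)
  have hev : F =ᶠ[𝓝 (z₀, (starRingEnd ℂ) z₀)] 0 := by
    have hWopen : IsOpen (M ⁻¹' (ball a₀ ε ×ˢ ball b₀ ε)) :=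
      (isOpen_ball.prod isOpen_ball).preimage hMcont
    have hWmem : (z₀, (starRingEnd ℂ) z₀) ∈ M ⁻¹' (ball a₀ ε ×ˢ ball b₀ ε) := by
      simp only [Set.mem_preimage, hM₀]
      exact ⟨ha₀mem, hb₀mem⟩
    filter_upwards [hWopen.mem_nhds hWmem] with p hp
    rw [hFG p]
    exact step2 _ hp.1 _ hp.2
  -- conclude by the identity principle on U ×ˢ U
  have hconn : IsPreconnected (U ×ˢ U) :=
    hUconn.isPreconnected.prod hUconn.isPreconnected
  have := hF.eqOn_zero_of_preconnected_of_eventuallyEq_zero hconn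
    (Set.mem_prod.2 ⟨hz₀U, hcz₀U⟩) hev
  intro z hz w hw
  exact this (Set.mem_prod.2 ⟨hz, hw⟩)
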